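/- Let A = k[X_1,…,X_n] and I an ideal such that R = A/I is smooth over k. Then there exists a k-algebra homomorphism d : A → S(I/I²) into the symmetric algebra of the conormal module which induces isomorphisms A/I^n ≅ S(I/I²)/J^n for all n ≥ 1, where J is the augmentation ideal of S(I/I²). In particular, the I-adic completion of A is isomorphic to the J-adic completion of S(I/I²). -/

import Mathlib

set_option synthInstance.maxHeartbeats 1000000
set_option maxHeartbeats 1000000

/-- The `i`-th graded piece `I^i / I^(i+1)` of the associated graded of an ideal. -/
abbrev Gr {A : Type*} [CommRing A] (I : Ideal A) (i : ℕ) :=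
  (↥(I ^ i)) ⧸ (Submodule.comap (I ^ i).subtype (I ^ (i + 1)))

/-- The natural quotient map `I^i → I^i/I^(i+1)` on an element. -/
def grMk {A : Type*} [CommRing A] (I : Ideal A) (i : ℕ) (a : A) (ha : a ∈ I ^ i) : Gr I i :=
  Submodule.Quotient.mk ⟨a, ha⟩

set_option linter.unusedSectionVars false


section GradedAux

variable {R S : Type*} [CommRing R] [CommRing S] [Algebra R S]
  (𝒜 : ℕ → Submodule R S) [GradedAlgebra 𝒜]

/-- The ideal generated by homogeneous elements of degree `≥ m`. -/
def Km (m : ℕ) : Ideal S := Ideal.span {s | ∃ i, m ≤ i ∧ s ∈ 𝒜 i}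

/-- The `R`-submodule of elements supported in degrees `≥ m`. -/
def Vm (m : ℕ) : Submodule R S := ⨆ i ∈ {i : ℕ | m ≤ i}, 𝒜 i

lemma grade_le_Vm {m i : ℕ} (h : m ≤ i) : 𝒜 i ≤ Vm 𝒜 m :=
  le_iSup₂ (f := fun i _ => 𝒜 i) i h

lemma Vm_induction {m : ℕ} (P : S → Prop) (h0 : P 0)
    (hadd : ∀ x y, P x → P y → P (x + y))
    (hgrade : ∀ i, m ≤ i → ∀ x ∈ 𝒜 i, P x) :
    ∀ x ∈ Vm 𝒜 m, P x := by
  intro x hx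
  refine Submodule.iSup_induction (motive := P)
    (fun i : ℕ => ⨆ _ : m ≤ i, 𝒜 i) ?_ ?_ h0 hadd
  · simpa [Vm, iSup_subtype] using hx
  · intro i x hx
    rcases le_or_gt m i with h | h
    · exact hgrade i h x (by simpa [h] using hx)
    · simp [not_le.mpr h] at hx
      simp [hx, h0]

lemma mul_mem_Vm {m : ℕ} (s : S) {x : S} (hx : x ∈ Vm 𝒜 m) : s * x ∈ Vm 𝒜 m := by
  classical
  have H : ∀ x ∈ Vm 𝒜 m, ∀ s : S, s * x ∈ Vm 𝒜 m := by
    refine Vm_induction 𝒜 _ (by simp) ?_ ?_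
    · intro x y hx hy s
      rw [mul_add]; exact add_mem (hx s) (hy s)
    · intro i hi x hx s
      rw [← DirectSum.sum_support_decompose 𝒜 s, Finset.sum_mul]
      refine Submodule.sum_mem _ fun d _ => ?_
      exact grade_le_Vm 𝒜 (le_add_of_nonneg_of_le (Nat.zero_le d) hi)
        (SetLike.mul_mem_graded (DirectSum.decompose 𝒜 s d).2 hx)
  exact H x hx s

lemma Km_le_Vm (m : ℕ) : (Km 𝒜 m : Set S) ⊆ (Vm 𝒜 m : Set S) := by
  intro x hx
  refine Submodule.span_induction ?_ (by simp) (fun a b _ _ ha hb => add_mem ha hb)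
    (fun s x _ hx => by simpa [smul_eq_mul] using mul_mem_Vm 𝒜 s hx) hx
  rintro y ⟨i, him, hy⟩
  exact grade_le_Vm 𝒜 him hy

lemma Vm_le_Km (m : ℕ) : (Vm 𝒜 m : Set S) ⊆ (Km 𝒜 m : Set S) := by
  refine Vm_induction 𝒜 _ (zero_mem _) (fun a b ha hb => add_mem ha hb) ?_
  intro i hi x hx
  exact Ideal.subset_span ⟨i, hi, hx⟩

lemma proj_eq_zero_of_mem_Km {m i : ℕ} (h : i < m) {s : S} (hs : s ∈ Km 𝒜 m) :
    GradedRing.proj 𝒜 i s = 0 := by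
  have hs' := Km_le_Vm 𝒜 m hs
  refine Vm_induction 𝒜 (fun s => GradedRing.proj 𝒜 i s = 0) (map_zero _)
    (fun a b ha hb => by rw [map_add, ha, hb, add_zero]) ?_ s hs'
  intro j hj x hx
  exact DirectSum.decompose_of_mem_ne 𝒜 hx (by omega)

lemma grade_mem_irrelevant {i : ℕ} (hi : 1 ≤ i) {x : S} (hx : x ∈ 𝒜 i) :
    x ∈ (HomogeneousIdeal.irrelevant 𝒜).toIdeal := by
  rw [HomogeneousIdeal.mem_iff, HomogeneousIdeal.mem_irrelevant_iff]
  exact DirectSum.decompose_of_mem_ne 𝒜 hx (by omega)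

lemma irrelevant_le_Km1 :
    (HomogeneousIdeal.irrelevant 𝒜).toIdeal ≤ Km 𝒜 1 := by
  intro x hx
  classical
  rw [HomogeneousIdeal.mem_iff, HomogeneousIdeal.mem_irrelevant_iff] at hx
  rw [← DirectSum.sum_support_decompose 𝒜 x]
  refine Submodule.sum_mem _ fun i _ => ?_
  rcases Nat.eq_zero_or_pos i with rfl | hi
  · rw [show ((DirectSum.decompose 𝒜 x 0 : 𝒜 0) : S) = GradedRing.proj 𝒜 0 x from rfl, hx]
    exact zero_mem _
  · exact Ideal.subset_span ⟨i, hi, (DirectSum.decompose 𝒜 x i).2⟩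

lemma Km_mul_le (a b : ℕ) : Km 𝒜 a * Km 𝒜 b ≤ Km 𝒜 (a + b) := by
  rw [Ideal.mul_le]
  intro r hr s hs
  have hr' := Km_le_Vm 𝒜 a hr
  have hs' := Km_le_Vm 𝒜 b hs
  refine Vm_le_Km 𝒜 (a + b) ?_
  refine Vm_induction 𝒜 (fun r => r * s ∈ Vm 𝒜 (a + b)) (by simp)
    (fun x y hx hy => by rw [add_mul]; exact add_mem hx hy) ?_ r hr'
  intro i hi x hx
  refine Vm_induction 𝒜 (fun s => x * s ∈ Vm 𝒜 (a + b)) (by simp)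
    (fun z w hz hw => by rw [mul_add]; exact add_mem hz hw) ?_ s hs'
  intro j hj y hy
  exact grade_le_Vm 𝒜 (add_le_add hi hj) (SetLike.mul_mem_graded hx hy)

lemma Km_zero : Km 𝒜 0 = ⊤ := by
  rw [Ideal.eq_top_iff_one]
  exact Ideal.subset_span ⟨0, le_refl 0, SetLike.one_mem_graded 𝒜⟩

lemma pow_irrelevant_le_Km (m : ℕ) :
    (HomogeneousIdeal.irrelevant 𝒜).toIdeal ^ m ≤ Km 𝒜 m := by
  induction m with
  | zero => rw [pow_zero, Km_zero, Ideal.one_eq_top]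
  | succ m ih =>
    rw [pow_succ]
    exact le_trans (Ideal.mul_mono ih (irrelevant_le_Km1 𝒜)) (Km_mul_le 𝒜 m 1)

lemma eq_zero_of_mem_grade_of_mem_Km {i : ℕ} {x : S} (hx : x ∈ 𝒜 i)
    (hx' : x ∈ Km 𝒜 (i + 1)) : x = 0 := by
  have := proj_eq_zero_of_mem_Km 𝒜 (Nat.lt_succ_self i) hx'
  rwa [GradedRing.proj_apply, DirectSum.decompose_of_mem_same 𝒜 hx] at this

end GradedAux

section GrAux

variable {A : Type*} [CommRing A] (I : Ideal A)

lemma grMk_add {i : ℕ} {a b : A} (ha : a ∈ I ^ i) (hb : b ∈ I ^ i) (h : a + b ∈ I ^ i) :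
    grMk I i (a + b) h = grMk I i a ha + grMk I i b hb := by
  unfold grMk
  rw [← Submodule.Quotient.mk_add]
  rfl

lemma grMk_smul {i : ℕ} {a : A} (c : A) (ha : a ∈ I ^ i) (h : c * a ∈ I ^ i) :
    grMk I i (c * a) h = c • grMk I i a ha := by
  unfold grMk
  rw [← Submodule.Quotient.mk_smul]
  rfl

lemma grMk_eq_zero_iff {i : ℕ} {a : A} (ha : a ∈ I ^ i) :
    grMk I i a ha = 0 ↔ a ∈ I ^ (i + 1) := by
  unfold grMk
  rw [Submodule.Quotient.mk_eq_zero]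
  rfl

lemma grMk_surjective (i : ℕ) (y : Gr I i) : ∃ a, ∃ ha : a ∈ I ^ i, grMk I i a ha = y := by
  obtain ⟨⟨a, ha⟩, rfl⟩ := Submodule.Quotient.mk_surjective _ y
  exact ⟨a, ha, rfl⟩

end GrAux

section Main

variable {k : Type*} [Field k] {n : ℕ} {S : Type*} [CommRing S]
  [Algebra (MvPolynomial (Fin n) k) S] [Algebra k S]
  [IsScalarTower k (MvPolynomial (Fin n) k) S]
  (I : Ideal (MvPolynomial (Fin n) k))
  (𝒜 : ℕ → Submodule (MvPolynomial (Fin n) k) S) [GradedAlgebra 𝒜]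

variable (π : ∀ i, 𝒜 i →ₗ[MvPolynomial (Fin n) k] Gr I i) (hbij : ∀ i, Function.Bijective (π i))

/-- The inverse of `π i` as a linear equivalence. -/
noncomputable def ψ (i : ℕ) : Gr I i ≃ₗ[MvPolynomial (Fin n) k] 𝒜 i :=
  (LinearEquiv.ofBijective (π i) (hbij i)).symm

lemma π_ψ (i : ℕ) (g : Gr I i) : π i (ψ I 𝒜 π hbij i g) = g :=
  (LinearEquiv.ofBijective (π i) (hbij i)).apply_symm_apply g

lemma ψ_π (i : ℕ) (x : 𝒜 i) : ψ I 𝒜 π hbij i (π i x) = x :=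
  (LinearEquiv.ofBijective (π i) (hbij i)).symm_apply_apply x

lemma mem_pow_zero (a : MvPolynomial (Fin n) k) : a ∈ I ^ 0 := by
  rw [pow_zero, Ideal.one_eq_top]; exact Submodule.mem_top

/-- The degree-zero "Teichmüller-type" lift `A → 𝒜 0 ⊆ S`. -/
noncomputable def qA (a : MvPolynomial (Fin n) k) : 𝒜 0 :=
  ψ I 𝒜 π hbij 0 (grMk I 0 a (mem_pow_zero I a))

noncomputable def q (a : MvPolynomial (Fin n) k) : S := (qA I 𝒜 π hbij a : S)

lemma q_mem (a : MvPolynomial (Fin n) k) : q I 𝒜 π hbij a ∈ 𝒜 0 := (qA I 𝒜 π hbij a).2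

lemma π_qA (a : MvPolynomial (Fin n) k) : π 0 (qA I 𝒜 π hbij a) = grMk I 0 a (mem_pow_zero I a) :=
  π_ψ I 𝒜 π hbij 0 _

lemma grMk_congr' {i : ℕ} {a b : MvPolynomial (Fin n) k} (h : a = b) (ha : a ∈ I ^ i)
    (hb : b ∈ I ^ i) : grMk I i a ha = grMk I i b hb := by subst h; rfl

variable (hπ : ∀ (i j : ℕ) (x : 𝒜 i) (y : 𝒜 j) (f g : MvPolynomial (Fin n) k)
      (hf : f ∈ I ^ i) (hg : g ∈ I ^ j),
      π i x = grMk I i f hf → π j y = grMk I j g hg →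
      π (i + j) ⟨(x : S) * (y : S), SetLike.mul_mem_graded x.2 y.2⟩ =
        grMk I (i + j) (f * g) (by rw [pow_add]; exact Ideal.mul_mem_mul hf hg))

include hbij hπ

lemma π_one : π 0 ⟨1, SetLike.one_mem_graded 𝒜⟩ = grMk I 0 1 (mem_pow_zero I 1) := by
  obtain ⟨f, hf, hu⟩ := grMk_surjective I 0 (π 0 ⟨1, SetLike.one_mem_graded 𝒜⟩)
  set x : 𝒜 0 := ψ I 𝒜 π hbij 0 (grMk I 0 1 (mem_pow_zero I 1)) with hx
  have hπx : π 0 x = grMk I 0 1 (mem_pow_zero I 1) := π_ψ I 𝒜 π hbij 0 _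
  have h := hπ 0 0 ⟨1, SetLike.one_mem_graded 𝒜⟩ x f 1 hf (mem_pow_zero I 1) hu.symm hπx
  have hx1 : (⟨(1 : S) * (x : S), SetLike.mul_mem_graded (SetLike.one_mem_graded 𝒜) x.2⟩ : 𝒜 0)
      = x := Subtype.ext (one_mul _)
  rw [hx1, hπx] at h
  rw [← hu, h]
  exact (grMk_congr' I (mul_one f) _ _).symm

lemma q_mul (a b : MvPolynomial (Fin n) k) :
    q I 𝒜 π hbij (a * b) = q I 𝒜 π hbij a * q I 𝒜 π hbij b := by
  have h := hπ 0 0 (qA I 𝒜 π hbij a) (qA I 𝒜 π hbij b) a b (mem_pow_zero I a)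
    (mem_pow_zero I b) (π_qA I 𝒜 π hbij a) (π_qA I 𝒜 π hbij b)
  have h2 := π_qA I 𝒜 π hbij (a * b)
  have := (hbij 0).1 (h2.trans h.symm)
  exact congrArg Subtype.val this

lemma q_one : q I 𝒜 π hbij 1 = 1 := by
  have h := (hbij 0).1 ((π_qA I 𝒜 π hbij 1).trans (π_one I 𝒜 π hbij hπ).symm)
  exact congrArg Subtype.val h

lemma qA_add (a b : MvPolynomial (Fin n) k) :
    qA I 𝒜 π hbij (a + b) = qA I 𝒜 π hbij a + qA I 𝒜 π hbij b := by
  unfold qA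
  rw [grMk_add I (mem_pow_zero I a) (mem_pow_zero I b), map_add]

lemma q_add (a b : MvPolynomial (Fin n) k) :
    q I 𝒜 π hbij (a + b) = q I 𝒜 π hbij a + q I 𝒜 π hbij b := by
  unfold q
  rw [qA_add I 𝒜 π hbij hπ]; rfl

lemma q_smul (c a : MvPolynomial (Fin n) k) :
    q I 𝒜 π hbij (c * a) = c • q I 𝒜 π hbij a := by
  unfold q qA
  rw [grMk_smul I c (mem_pow_zero I a), map_smul]
  rfl

lemma q_C (c : k) : q I 𝒜 π hbij (MvPolynomial.C c) = algebraMap k S c := by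
  have h1 : (MvPolynomial.C c : MvPolynomial (Fin n) k) = MvPolynomial.C c * 1 := (mul_one _).symm
  rw [h1, q_smul I 𝒜 π hbij hπ, q_one I 𝒜 π hbij hπ, Algebra.smul_def, mul_one,
    show (MvPolynomial.C c : MvPolynomial (Fin n) k) = algebraMap k (MvPolynomial (Fin n) k) c
      from rfl, ← IsScalarTower.algebraMap_apply]

lemma q_eq_zero {a : MvPolynomial (Fin n) k} (ha : a ∈ I) : q I 𝒜 π hbij a = 0 := by
  unfold q qA
  have h0 : grMk I 0 a (mem_pow_zero I a) = 0 := by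
    rw [grMk_eq_zero_iff]
    rwa [zero_add, pow_one]
  rw [h0, map_zero]
  rfl

lemma q_sub (a b : MvPolynomial (Fin n) k) :
    q I 𝒜 π hbij (a - b) = q I 𝒜 π hbij a - q I 𝒜 π hbij b := by
  have h := q_add I 𝒜 π hbij hπ (a - b) b
  rw [sub_add_cancel] at h
  exact eq_sub_of_add_eq h.symm

lemma qA_surjective (x : 𝒜 0) : ∃ a, qA I 𝒜 π hbij a = x := by
  obtain ⟨a, ha, h⟩ := grMk_surjective I 0 (π 0 x)
  refine ⟨a, ?_⟩
  unfold qA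
  rw [show grMk I 0 a (mem_pow_zero I a) = π 0 x from h, ψ_π]

lemma psi_mem_pow : ∀ (i : ℕ) (f : MvPolynomial (Fin n) k) (hf : f ∈ I ^ i),
    (ψ I 𝒜 π hbij i (grMk I i f hf) : S) ∈ (Ideal.span (𝒜 1 : Set S)) ^ i := by
  intro i
  induction i with
  | zero =>
    intro f hf
    rw [pow_zero, Ideal.one_eq_top]
    exact Submodule.mem_top
  | succ i ih =>
    have key : ∀ f (hf : f ∈ I ^ i * I),
        (ψ I 𝒜 π hbij (i+1) (grMk I (i+1) f (by rw [pow_succ] at *; exact hf)) : S) ∈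
          (Ideal.span (𝒜 1 : Set S)) ^ (i+1) := by
      intro f hf
      induction hf using Submodule.mul_induction_on' with
      | mem_mul_mem g hg h hh =>
        have hh1 : h ∈ I ^ 1 := by rwa [pow_one]
        set x := ψ I 𝒜 π hbij i (grMk I i g hg) with hxdef
        set y := ψ I 𝒜 π hbij 1 (grMk I 1 h hh1) with hydef
        have h1 : π i x = grMk I i g hg := π_ψ I 𝒜 π hbij i _
        have h2 : π 1 y = grMk I 1 h hh1 := π_ψ I 𝒜 π hbij 1 _
        have h3 := hπ i 1 x y g h hg hh1 h1 h2
        have h4 : ψ I 𝒜 π hbij (i+1)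
            (grMk I (i+1) (g*h) (by rw [pow_succ]; exact Submodule.mul_mem_mul hg hh)) =
            ⟨(x : S) * (y : S), SetLike.mul_mem_graded x.2 y.2⟩ := by
          rw [show grMk I (i+1) (g*h) _ =
            π (i+1) ⟨(x : S) * (y : S), SetLike.mul_mem_graded x.2 y.2⟩ from h3.symm,
            ψ_π]
        rw [h4]
        rw [pow_succ]
        exact Ideal.mul_mem_mul (ih g hg) (Ideal.subset_span y.2)
      | add a ha b hb iha ihb =>
        have hab : grMk I (i+1) (a + b) (by rw [pow_succ]; exact add_mem ha hb) =
            grMk I (i+1) a (by rw [pow_succ]; exact ha) +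
            grMk I (i+1) b (by rw [pow_succ]; exact hb) :=
          grMk_add I _ _ _
        rw [hab, map_add]
        exact add_mem iha ihb
    intro f hf
    have hf2 : f ∈ I ^ i * I := by rwa [← pow_succ]
    exact key f hf2

lemma grade_mem_pow {m i : ℕ} (him : m ≤ i) {x : S} (hx : x ∈ 𝒜 i) :
    x ∈ (HomogeneousIdeal.irrelevant 𝒜).toIdeal ^ m := by
  obtain ⟨f, hf, h⟩ := grMk_surjective I i (π i ⟨x, hx⟩)
  have hx2 : ψ I 𝒜 π hbij i (grMk I i f hf) = ⟨x, hx⟩ := by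
    rw [show grMk I i f hf = π i ⟨x, hx⟩ from h, ψ_π]
  have hmem := psi_mem_pow I 𝒜 π hbij hπ i f hf
  rw [hx2] at hmem
  have hT : Ideal.span (𝒜 1 : Set S) ≤ (HomogeneousIdeal.irrelevant 𝒜).toIdeal := by
    rw [Ideal.span_le]
    intro y hy
    exact grade_mem_irrelevant 𝒜 (le_refl 1) hy
  exact Ideal.pow_le_pow_right him (Ideal.pow_right_mono hT i hmem)

lemma Km_eq_pow (m : ℕ) :
    (HomogeneousIdeal.irrelevant 𝒜).toIdeal ^ m = Km 𝒜 m := by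
  refine le_antisymm (pow_irrelevant_le_Km 𝒜 m) ?_
  rw [Km, Ideal.span_le]
  rintro x ⟨i, him, hx⟩
  exact grade_mem_pow I 𝒜 π hbij hπ him hx

omit hπ in
lemma sum_mem_grade1 (e : Fin n → 𝒜 1) (g : Fin n → MvPolynomial (Fin n) k) :
    (∑ j, q I 𝒜 π hbij (g j) * ((e j : S))) ∈ 𝒜 1 :=
  Submodule.sum_mem _ fun j _ =>
    SetLike.mul_mem_graded (q_mem I 𝒜 π hbij (g j)) (e j).2

omit hπ in
lemma exists_e [Algebra.Smooth k (MvPolynomial (Fin n) k ⧸ I)]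
    (hπ : ∀ (i j : ℕ) (x : 𝒜 i) (y : 𝒜 j) (f g : MvPolynomial (Fin n) k)
      (hf : f ∈ I ^ i) (hg : g ∈ I ^ j),
      π i x = grMk I i f hf → π j y = grMk I j g hg →
      π (i + j) ⟨(x : S) * (y : S), SetLike.mul_mem_graded x.2 y.2⟩ =
        grMk I (i + j) (f * g) (by rw [pow_add]; exact Ideal.mul_mem_mul hf hg)) :
    ∃ e : Fin n → 𝒜 1, ∀ (f : MvPolynomial (Fin n) k) (hf : f ∈ I ^ 1),
      π 1 ⟨∑ j, q I 𝒜 π hbij (MvPolynomial.pderiv j f) * (e j : S),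
        sum_mem_grade1 I 𝒜 π hbij e (fun j => MvPolynomial.pderiv j f)⟩ = grMk I 1 f hf := by
  classical
  have hsurj : Function.Surjective
      (algebraMap (MvPolynomial (Fin n) k) (MvPolynomial (Fin n) k ⧸ I)) := by
    rw [Ideal.Quotient.algebraMap_eq]
    exact Ideal.Quotient.mk_surjective
  set K := RingHom.ker (algebraMap (MvPolynomial (Fin n) k) (MvPolynomial (Fin n) k ⧸ I)) with hKdef
  have hK : K = I := by rw [hKdef, Ideal.Quotient.algebraMap_eq, Ideal.mk_ker]
  haveI : Algebra.FormallySmooth k (MvPolynomial (Fin n) k) :=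
    Algebra.FormallySmooth.of_equiv (MvPolynomial.renameEquiv k Equiv.ulift.{0})
  obtain ⟨l, hl⟩ := (Algebra.FormallySmooth.iff_split_injection (R := k) hsurj).mp inferInstance
  -- the map K.Cotangent → Gr I 1
  have hmemK : ∀ x : K, (x : MvPolynomial (Fin n) k) ∈ I ^ 1 := by
    intro x; rw [pow_one, ← hK]; exact x.2
  let toGr : K →ₗ[MvPolynomial (Fin n) k] Gr I 1 :=
    { toFun := fun x => grMk I 1 x.1 (hmemK x)
      map_add' := fun x y => grMk_add I _ _ _
      map_smul' := fun m x => by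
        simp only [RingHom.id_apply]
        exact grMk_smul I m (hmemK x) (hmemK (m • x)) }
  have hle : (K • ⊤ : Submodule (MvPolynomial (Fin n) k) K) ≤ LinearMap.ker toGr := by
    refine Submodule.smul_le.2 fun c hc x _ => ?_
    simp only [LinearMap.mem_ker]
    show grMk I 1 (c * (x : MvPolynomial (Fin n) k)) _ = 0
    rw [grMk_eq_zero_iff]
    have : c * (x : MvPolynomial (Fin n) k) ∈ I * I :=
      Ideal.mul_mem_mul (hK ▸ hc) (hK ▸ x.2)
    rwa [pow_succ, pow_one]
  let c : K.Cotangent →ₗ[MvPolynomial (Fin n) k] Gr I 1 := Submodule.liftQ _ toGr hle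
  have hc : ∀ x : K, c (Ideal.toCotangent K x) = grMk I 1 x.1 (hmemK x) := fun x => rfl
  -- the elements
  let ω : Fin n → K.Cotangent := fun j =>
    l (1 ⊗ₜ (KaehlerDifferential.D k (MvPolynomial (Fin n) k) (MvPolynomial.X j)))
  refine ⟨fun j => ψ I 𝒜 π hbij 1 (c (ω j)), ?_⟩
  intro f hf
  have hfK : f ∈ K := by rw [hK]; rwa [pow_one] at hf
  -- step 1
  have step1 : Ideal.toCotangent K ⟨f, hfK⟩ =
      l (1 ⊗ₜ (KaehlerDifferential.D k (MvPolynomial (Fin n) k) f)) := by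
    have := LinearMap.congr_fun hl (Ideal.toCotangent K ⟨f, hfK⟩)
    rw [LinearMap.comp_apply, KaehlerDifferential.kerCotangentToTensor_toCotangent] at this
    exact this.symm
  -- step 2 : decompose D f in the basis
  have step2 : (KaehlerDifferential.D k (MvPolynomial (Fin n) k) f) =
      ∑ j, (MvPolynomial.pderiv j f) •
        (KaehlerDifferential.D k (MvPolynomial (Fin n) k) (MvPolynomial.X j)) := by
    have hb := (KaehlerDifferential.mvPolynomialBasis k (Fin n)).sum_repr
      (KaehlerDifferential.D k (MvPolynomial (Fin n) k) f)
    rw [← hb]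
    refine Finset.sum_congr rfl fun j _ => ?_
    rw [KaehlerDifferential.mvPolynomialBasis_repr_apply,
      KaehlerDifferential.mvPolynomialBasis_apply]
  -- step 4
  have step4 : Ideal.toCotangent K ⟨f, hfK⟩ = ∑ j, (MvPolynomial.pderiv j f) • ω j := by
    rw [step1, step2, TensorProduct.tmul_sum, map_sum]
    refine Finset.sum_congr rfl fun j _ => ?_
    rw [TensorProduct.tmul_smul, map_smul]
  -- step 5
  have step5 : grMk I 1 f hf = ∑ j, (MvPolynomial.pderiv j f) • c (ω j) := by
    rw [show grMk I 1 f hf = c (Ideal.toCotangent K ⟨f, hfK⟩) from (hc ⟨f, hfK⟩).symm, step4,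
      map_sum]
    refine Finset.sum_congr rfl fun j _ => ?_
    rw [map_smul]
  -- step 6 : compute π 1 of the sum
  choose g hg hgr using fun j => grMk_surjective I 1 (π 1 (ψ I 𝒜 π hbij 1 (c (ω j))))
  have hsum : (⟨∑ j, q I 𝒜 π hbij (MvPolynomial.pderiv j f) *
        ((ψ I 𝒜 π hbij 1 (c (ω j)) : S)),
        sum_mem_grade1 I 𝒜 π hbij (fun j => ψ I 𝒜 π hbij 1 (c (ω j)))
          (fun j => MvPolynomial.pderiv j f)⟩ : 𝒜 1) =
      ∑ j, (⟨q I 𝒜 π hbij (MvPolynomial.pderiv j f) * ((ψ I 𝒜 π hbij 1 (c (ω j)) : S)),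
        SetLike.mul_mem_graded (q_mem I 𝒜 π hbij _) (ψ I 𝒜 π hbij 1 (c (ω j))).2⟩ : 𝒜 1) := by
    refine Subtype.ext ?_
    rw [AddSubmonoidClass.coe_finset_sum]
  rw [hsum, map_sum, step5]
  refine Finset.sum_congr rfl fun j _ => ?_
  have hmul := hπ 0 1 (qA I 𝒜 π hbij (MvPolynomial.pderiv j f)) (ψ I 𝒜 π hbij 1 (c (ω j)))
    (MvPolynomial.pderiv j f) (g j) (mem_pow_zero I _) (hg j)
    (π_qA I 𝒜 π hbij _) (hgr j).symm
  have hcg : grMk I 1 (g j) (hg j) = c (ω j) := by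
    rw [hgr j, π_ψ]
  have h2 : (MvPolynomial.pderiv j f) • c (ω j) =
      grMk I 1 ((MvPolynomial.pderiv j f) * g j) (Ideal.mul_mem_left _ _ (hg j)) := by
    rw [← hcg]
    exact (grMk_smul I _ (hg j) _).symm
  exact hmul.trans h2.symm

/-- The Taylor lift `d : A →ₐ[k] S`. -/
noncomputable def dmap (e : Fin n → 𝒜 1) : MvPolynomial (Fin n) k →ₐ[k] S :=
  MvPolynomial.aeval (fun j => q I 𝒜 π hbij (MvPolynomial.X j) + (e j : S))

lemma taylor (e : Fin n → 𝒜 1) (f : MvPolynomial (Fin n) k) :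
    dmap I 𝒜 π hbij e f - q I 𝒜 π hbij f -
      ∑ j, q I 𝒜 π hbij (MvPolynomial.pderiv j f) * (e j : S)
      ∈ (HomogeneousIdeal.irrelevant 𝒜).toIdeal ^ 2 := by
  classical
  have hq0 : q I 𝒜 π hbij (0 : MvPolynomial (Fin n) k) = 0 :=
    q_eq_zero I 𝒜 π hbij hπ (zero_mem I)
  induction f using MvPolynomial.induction_on with
  | C a =>
    have h1 : dmap I 𝒜 π hbij e (MvPolynomial.C a) = algebraMap k S a := by
      simp [dmap]
    have h2 : q I 𝒜 π hbij (MvPolynomial.C a) = algebraMap k S a := q_C I 𝒜 π hbij hπ a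
    have h3 : ∀ j : Fin n, q I 𝒜 π hbij (MvPolynomial.pderiv j (MvPolynomial.C a)) = 0 := by
      intro j; rw [MvPolynomial.pderiv_C, hq0]
    simp only [h1, h2, h3, zero_mul, Finset.sum_const_zero, sub_zero, sub_self]
    exact zero_mem _
  | add p p' hp hp' =>
    have key : dmap I 𝒜 π hbij e (p + p') - q I 𝒜 π hbij (p + p') -
        ∑ j, q I 𝒜 π hbij (MvPolynomial.pderiv j (p + p')) * (e j : S) =
        (dmap I 𝒜 π hbij e p - q I 𝒜 π hbij p -
          ∑ j, q I 𝒜 π hbij (MvPolynomial.pderiv j p) * (e j : S)) +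
        (dmap I 𝒜 π hbij e p' - q I 𝒜 π hbij p' -
          ∑ j, q I 𝒜 π hbij (MvPolynomial.pderiv j p') * (e j : S)) := by
      rw [map_add, q_add I 𝒜 π hbij hπ]
      have : ∀ j : Fin n, q I 𝒜 π hbij (MvPolynomial.pderiv j (p + p')) * (e j : S) =
          q I 𝒜 π hbij (MvPolynomial.pderiv j p) * (e j : S) +
          q I 𝒜 π hbij (MvPolynomial.pderiv j p') * (e j : S) := by
        intro j
        rw [map_add, q_add I 𝒜 π hbij hπ, add_mul]
      rw [Finset.sum_congr rfl fun j _ => this j, Finset.sum_add_distrib]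
      ring
    rw [key]
    exact add_mem hp hp'
  | mul_X p j hp =>
    set J : Ideal S := (HomogeneousIdeal.irrelevant 𝒜).toIdeal with hJ
    set T : S := ∑ i, q I 𝒜 π hbij (MvPolynomial.pderiv i p) * (e i : S) with hT
    set u : S := dmap I 𝒜 π hbij e p - q I 𝒜 π hbij p - T with hu
    have hdp : dmap I 𝒜 π hbij e p = q I 𝒜 π hbij p + T + u := by rw [hu]; ring
    have F1 : dmap I 𝒜 π hbij e (p * MvPolynomial.X j) =
        dmap I 𝒜 π hbij e p * (q I 𝒜 π hbij (MvPolynomial.X j) + (e j : S)) := by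
      rw [map_mul]
      congr 1
      simp [dmap]
    have F2 : q I 𝒜 π hbij (p * MvPolynomial.X j) =
        q I 𝒜 π hbij p * q I 𝒜 π hbij (MvPolynomial.X j) := q_mul I 𝒜 π hbij hπ p _
    have hsplit : ∑ i, q I 𝒜 π hbij (MvPolynomial.pderiv i (p * MvPolynomial.X j)) * (e i : S) =
        T * q I 𝒜 π hbij (MvPolynomial.X j) + q I 𝒜 π hbij p * (e j : S) := by
      have hterm : ∀ i : Fin n,
          q I 𝒜 π hbij (MvPolynomial.pderiv i (p * MvPolynomial.X j)) * (e i : S) =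
          q I 𝒜 π hbij (MvPolynomial.pderiv i p) * q I 𝒜 π hbij (MvPolynomial.X j) * (e i : S) +
          q I 𝒜 π hbij (p * MvPolynomial.pderiv i (MvPolynomial.X j)) * (e i : S) := by
        intro i
        rw [MvPolynomial.pderiv_mul, q_add I 𝒜 π hbij hπ, q_mul I 𝒜 π hbij hπ, add_mul]
      rw [Finset.sum_congr rfl fun i _ => hterm i, Finset.sum_add_distrib]
      congr 1
      · rw [hT, Finset.sum_mul]
        exact Finset.sum_congr rfl fun i _ => by ring
      · rw [Finset.sum_eq_single j]
        · rw [MvPolynomial.pderiv_X_self, mul_one]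
        · intro i _ hij
          rw [MvPolynomial.pderiv_X_of_ne (Ne.symm hij), mul_zero, hq0, zero_mul]
        · intro h; exact absurd (Finset.mem_univ j) h
    have key : dmap I 𝒜 π hbij e (p * MvPolynomial.X j) -
        q I 𝒜 π hbij (p * MvPolynomial.X j) -
        ∑ i, q I 𝒜 π hbij (MvPolynomial.pderiv i (p * MvPolynomial.X j)) * (e i : S) =
        u * (q I 𝒜 π hbij (MvPolynomial.X j) + (e j : S)) + T * (e j : S) := by
      rw [F1, F2, hsplit, hdp]
      ring
    rw [key]
    refine add_mem (Ideal.mul_mem_right _ _ hp) ?_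
    have hTJ : T ∈ J := by
      rw [hT]
      refine Submodule.sum_mem _ fun i _ => ?_
      exact Ideal.mul_mem_left _ _ (grade_mem_irrelevant 𝒜 (le_refl 1) (e i).2)
    have heJ : (e j : S) ∈ J := grade_mem_irrelevant 𝒜 (le_refl 1) (e j).2
    rw [pow_two]
    exact Ideal.mul_mem_mul hTJ heJ

lemma d_sub_q_mem (e : Fin n → 𝒜 1) (f : MvPolynomial (Fin n) k) :
    dmap I 𝒜 π hbij e f - q I 𝒜 π hbij f ∈ (HomogeneousIdeal.irrelevant 𝒜).toIdeal := by
  have h1 := taylor I 𝒜 π hbij hπ e f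
  have h2 : (∑ j, q I 𝒜 π hbij (MvPolynomial.pderiv j f) * (e j : S)) ∈
      (HomogeneousIdeal.irrelevant 𝒜).toIdeal :=
    Submodule.sum_mem _ fun i _ =>
      Ideal.mul_mem_left _ _ (grade_mem_irrelevant 𝒜 (le_refl 1) (e i).2)
  have := add_mem (Ideal.pow_le_self two_ne_zero h1) h2
  simpa using this

lemma d_mem_of_mem (e : Fin n → 𝒜 1) {a : MvPolynomial (Fin n) k} (ha : a ∈ I) :
    dmap I 𝒜 π hbij e a ∈ (HomogeneousIdeal.irrelevant 𝒜).toIdeal := by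
  have := d_sub_q_mem I 𝒜 π hbij hπ e a
  rwa [q_eq_zero I 𝒜 π hbij hπ ha, sub_zero] at this

lemma d_pow_mem (e : Fin n → 𝒜 1) (m : ℕ) {a : MvPolynomial (Fin n) k} (ha : a ∈ I ^ m) :
    dmap I 𝒜 π hbij e a ∈ (HomogeneousIdeal.irrelevant 𝒜).toIdeal ^ m := by
  have hmap : Ideal.map (dmap I 𝒜 π hbij e) I ≤ (HomogeneousIdeal.irrelevant 𝒜).toIdeal := by
    rw [Ideal.map_le_iff_le_comap]
    intro x hx
    exact d_mem_of_mem I 𝒜 π hbij hπ e hx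
  have h1 : dmap I 𝒜 π hbij e a ∈ Ideal.map (dmap I 𝒜 π hbij e) (I ^ m) :=
    Ideal.mem_map_of_mem _ ha
  rw [Ideal.map_pow] at h1
  exact Ideal.pow_right_mono hmap m h1

lemma claimD1 (e : Fin n → 𝒜 1)
    (he : ∀ (f : MvPolynomial (Fin n) k) (hf : f ∈ I ^ 1),
      π 1 ⟨∑ j, q I 𝒜 π hbij (MvPolynomial.pderiv j f) * (e j : S),
        sum_mem_grade1 I 𝒜 π hbij e (fun j => MvPolynomial.pderiv j f)⟩ = grMk I 1 f hf)
    (f : MvPolynomial (Fin n) k) (hf : f ∈ I ^ 1) :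
    dmap I 𝒜 π hbij e f - (ψ I 𝒜 π hbij 1 (grMk I 1 f hf) : S) ∈
      (HomogeneousIdeal.irrelevant 𝒜).toIdeal ^ 2 := by
  have hfI : f ∈ I := by rwa [pow_one] at hf
  have hψ : ψ I 𝒜 π hbij 1 (grMk I 1 f hf) =
      ⟨∑ j, q I 𝒜 π hbij (MvPolynomial.pderiv j f) * (e j : S),
        sum_mem_grade1 I 𝒜 π hbij e (fun j => MvPolynomial.pderiv j f)⟩ := by
    rw [← he f hf, ψ_π]
  rw [hψ]
  have := taylor I 𝒜 π hbij hπ e f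
  rwa [q_eq_zero I 𝒜 π hbij hπ hfI, sub_zero] at this

lemma claimD (e : Fin n → 𝒜 1)
    (he : ∀ (f : MvPolynomial (Fin n) k) (hf : f ∈ I ^ 1),
      π 1 ⟨∑ j, q I 𝒜 π hbij (MvPolynomial.pderiv j f) * (e j : S),
        sum_mem_grade1 I 𝒜 π hbij e (fun j => MvPolynomial.pderiv j f)⟩ = grMk I 1 f hf) :
    ∀ (m : ℕ) (f : MvPolynomial (Fin n) k) (hf : f ∈ I ^ m),
    dmap I 𝒜 π hbij e f - (ψ I 𝒜 π hbij m (grMk I m f hf) : S) ∈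
      (HomogeneousIdeal.irrelevant 𝒜).toIdeal ^ (m + 1) := by
  intro m
  induction m with
  | zero =>
    intro f hf
    have h := d_sub_q_mem I 𝒜 π hbij hπ e f
    rw [pow_one]
    exact h
  | succ m ih =>
    rcases Nat.eq_zero_or_pos m with rfl | hm
    · exact claimD1 I 𝒜 π hbij hπ e he
    · intro f hf
      have hf' : f ∈ I ^ m * I := by rwa [← pow_succ]
      have key : ∀ f' (hf' : f' ∈ I ^ m * I),
          dmap I 𝒜 π hbij e f' -
            (ψ I 𝒜 π hbij (m+1) (grMk I (m+1) f' (by rwa [pow_succ])) : S) ∈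
          (HomogeneousIdeal.irrelevant 𝒜).toIdeal ^ (m + 2) := by
        intro f' hf'
        induction hf' using Submodule.mul_induction_on' with
        | mem_mul_mem g hg h hh =>
          have hh1 : h ∈ I ^ 1 := by rwa [pow_one]
          set x := ψ I 𝒜 π hbij m (grMk I m g hg) with hxdef
          set y := ψ I 𝒜 π hbij 1 (grMk I 1 h hh1) with hydef
          have h3 := hπ m 1 x y g h hg hh1 (π_ψ I 𝒜 π hbij m _) (π_ψ I 𝒜 π hbij 1 _)
          have h4 : ψ I 𝒜 π hbij (m+1)
              (grMk I (m+1) (g*h) (by rw [pow_succ]; exact Submodule.mul_mem_mul hg hh)) =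
              ⟨(x : S) * (y : S), SetLike.mul_mem_graded x.2 y.2⟩ := by
            rw [show grMk I (m+1) (g*h) _ =
              π (m+1) ⟨(x : S) * (y : S), SetLike.mul_mem_graded x.2 y.2⟩ from h3.symm, ψ_π]
          have hid : dmap I 𝒜 π hbij e (g * h) - (x : S) * (y : S) =
              (dmap I 𝒜 π hbij e g - (x : S)) * dmap I 𝒜 π hbij e h +
              (x : S) * (dmap I 𝒜 π hbij e h - (y : S)) := by
            rw [map_mul]; ring
          have m1 : (dmap I 𝒜 π hbij e g - (x : S)) * dmap I 𝒜 π hbij e h ∈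
              (HomogeneousIdeal.irrelevant 𝒜).toIdeal ^ (m + 2) := by
            have ha := ih g hg
            have hb := d_mem_of_mem I 𝒜 π hbij hπ e (by rwa [pow_one] at hh1)
            rw [show m + 2 = (m + 1) + 1 from rfl, pow_succ]
            exact Ideal.mul_mem_mul ha hb
          have m2 : (x : S) * (dmap I 𝒜 π hbij e h - (y : S)) ∈
              (HomogeneousIdeal.irrelevant 𝒜).toIdeal ^ (m + 2) := by
            have ha : (x : S) ∈ (HomogeneousIdeal.irrelevant 𝒜).toIdeal ^ m :=
              grade_mem_pow I 𝒜 π hbij hπ (le_refl m) x.2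
            have hb := claimD1 I 𝒜 π hbij hπ e he h hh1
            rw [show m + 2 = m + 2 from rfl, pow_add]
            exact Ideal.mul_mem_mul ha hb
          rw [h4]
          rw [hid]
          exact add_mem m1 m2
        | add a ha b hb iha ihb =>
          have hab : grMk I (m+1) (a + b) (by rw [pow_succ]; exact add_mem ha hb) =
              grMk I (m+1) a (by rw [pow_succ]; exact ha) +
              grMk I (m+1) b (by rw [pow_succ]; exact hb) := grMk_add I _ _ _
          have : dmap I 𝒜 π hbij e (a + b) -
              (ψ I 𝒜 π hbij (m+1) (grMk I (m+1) (a+b) (by rw [pow_succ]; exact add_mem ha hb)) : S)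
              = (dmap I 𝒜 π hbij e a -
                (ψ I 𝒜 π hbij (m+1) (grMk I (m+1) a (by rw [pow_succ]; exact ha)) : S)) +
                (dmap I 𝒜 π hbij e b -
                (ψ I 𝒜 π hbij (m+1) (grMk I (m+1) b (by rw [pow_succ]; exact hb)) : S)) := by
            rw [map_add, hab, map_add]
            push_cast
            ring
          rw [this]
          exact add_mem iha ihb
      exact key f hf'

lemma surj0 (e : Fin n → 𝒜 1) (s : S) :
    ∃ a, s - dmap I 𝒜 π hbij e a ∈ (HomogeneousIdeal.irrelevant 𝒜).toIdeal := by
  obtain ⟨a, ha⟩ := qA_surjective I 𝒜 π hbij hπ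
    ⟨GradedRing.proj 𝒜 0 s, (DirectSum.decompose 𝒜 s 0).2⟩
  refine ⟨a, ?_⟩
  have hqa : q I 𝒜 π hbij a = GradedRing.proj 𝒜 0 s := congrArg Subtype.val ha
  have h1 : s - GradedRing.proj 𝒜 0 s ∈ (HomogeneousIdeal.irrelevant 𝒜).toIdeal := by
    rw [HomogeneousIdeal.mem_iff, HomogeneousIdeal.mem_irrelevant_iff, map_sub]
    rw [show GradedRing.proj 𝒜 0 (GradedRing.proj 𝒜 0 s) = GradedRing.proj 𝒜 0 s by
      rw [GradedRing.proj_apply, GradedRing.proj_apply,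
        DirectSum.decompose_of_mem_same 𝒜 (DirectSum.decompose 𝒜 s 0).2], sub_self]
  have h2 := d_sub_q_mem I 𝒜 π hbij hπ e a
  rw [hqa] at h2
  have hh : s - dmap I 𝒜 π hbij e a =
      (s - GradedRing.proj 𝒜 0 s) - (dmap I 𝒜 π hbij e a - GradedRing.proj 𝒜 0 s) := by ring
  rw [hh]
  exact sub_mem h1 h2

lemma surjStep (e : Fin n → 𝒜 1)
    (he : ∀ (f : MvPolynomial (Fin n) k) (hf : f ∈ I ^ 1),
      π 1 ⟨∑ j, q I 𝒜 π hbij (MvPolynomial.pderiv j f) * (e j : S),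
        sum_mem_grade1 I 𝒜 π hbij e (fun j => MvPolynomial.pderiv j f)⟩ = grMk I 1 f hf)
    (m : ℕ) (s : S) (hs : s ∈ (HomogeneousIdeal.irrelevant 𝒜).toIdeal ^ m) :
    ∃ a ∈ I ^ m, s - dmap I 𝒜 π hbij e a ∈
      (HomogeneousIdeal.irrelevant 𝒜).toIdeal ^ (m + 1) := by
  rw [Km_eq_pow I 𝒜 π hbij hπ m] at hs
  refine Submodule.span_induction ?_ ?_ ?_ ?_ hs
  · rintro x ⟨i, him, hx⟩
    rcases eq_or_lt_of_le him with heq | hlt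
    · subst heq
      obtain ⟨f, hf, hgr⟩ := grMk_surjective I m (π m ⟨x, hx⟩)
      refine ⟨f, hf, ?_⟩
      have hx2 : (ψ I 𝒜 π hbij m (grMk I m f hf) : S) = x := by
        rw [show grMk I m f hf = π m ⟨x, hx⟩ from hgr, ψ_π]
      have hcd := claimD I 𝒜 π hbij hπ e he m f hf
      rw [hx2] at hcd
      have := neg_mem hcd
      simpa using this
    · refine ⟨0, zero_mem _, ?_⟩
      rw [map_zero, sub_zero]
      exact grade_mem_pow I 𝒜 π hbij hπ hlt hx
  · exact ⟨0, zero_mem _, by rw [map_zero, sub_zero]; exact zero_mem _⟩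
  · rintro x y _ _ ⟨a, haI, ha⟩ ⟨b, hbI, hb⟩
    refine ⟨a + b, add_mem haI hbI, ?_⟩
    rw [map_add]
    have : x + y - (dmap I 𝒜 π hbij e a + dmap I 𝒜 π hbij e b) =
        (x - dmap I 𝒜 π hbij e a) + (y - dmap I 𝒜 π hbij e b) := by ring
    rw [this]
    exact add_mem ha hb
  · rintro r x hx ⟨b, hbI, hb⟩
    obtain ⟨r0, hr0⟩ := surj0 I 𝒜 π hbij hπ e r
    refine ⟨r0 * b, Ideal.mul_mem_left _ _ hbI, ?_⟩
    have hxJ : x ∈ (HomogeneousIdeal.irrelevant 𝒜).toIdeal ^ m := by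
      rw [Km_eq_pow I 𝒜 π hbij hπ m]; exact hx
    have hident : r • x - dmap I 𝒜 π hbij e (r0 * b) =
        (r - dmap I 𝒜 π hbij e r0) * x +
        dmap I 𝒜 π hbij e r0 * (x - dmap I 𝒜 π hbij e b) := by
      rw [map_mul, smul_eq_mul]; ring
    rw [hident]
    refine add_mem ?_ (Ideal.mul_mem_left _ _ hb)
    have : (r - dmap I 𝒜 π hbij e r0) * x ∈
        (HomogeneousIdeal.irrelevant 𝒜).toIdeal ^ (1 + m) :=
      pow_add (HomogeneousIdeal.irrelevant 𝒜).toIdeal 1 m ▸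
        Ideal.mul_mem_mul (by rwa [pow_one]) hxJ
    rwa [add_comm 1 m] at this

lemma surjFull (e : Fin n → 𝒜 1)
    (he : ∀ (f : MvPolynomial (Fin n) k) (hf : f ∈ I ^ 1),
      π 1 ⟨∑ j, q I 𝒜 π hbij (MvPolynomial.pderiv j f) * (e j : S),
        sum_mem_grade1 I 𝒜 π hbij e (fun j => MvPolynomial.pderiv j f)⟩ = grMk I 1 f hf)
    (m : ℕ) (s : S) :
    ∃ a, s - dmap I 𝒜 π hbij e a ∈ (HomogeneousIdeal.irrelevant 𝒜).toIdeal ^ m := by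
  induction m with
  | zero => exact ⟨0, by rw [pow_zero, Ideal.one_eq_top]; exact Submodule.mem_top⟩
  | succ m ih =>
    obtain ⟨a, ha⟩ := ih
    obtain ⟨b, _, hb⟩ := surjStep I 𝒜 π hbij hπ e he m _ ha
    refine ⟨a + b, ?_⟩
    rw [map_add]
    rw [sub_add_eq_sub_sub]
    exact hb
    
lemma injFull (e : Fin n → 𝒜 1)
    (he : ∀ (f : MvPolynomial (Fin n) k) (hf : f ∈ I ^ 1),
      π 1 ⟨∑ j, q I 𝒜 π hbij (MvPolynomial.pderiv j f) * (e j : S),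
        sum_mem_grade1 I 𝒜 π hbij e (fun j => MvPolynomial.pderiv j f)⟩ = grMk I 1 f hf)
    (m : ℕ) (a : MvPolynomial (Fin n) k)
    (ha : dmap I 𝒜 π hbij e a ∈ (HomogeneousIdeal.irrelevant 𝒜).toIdeal ^ m) :
    a ∈ I ^ m := by
  induction m with
  | zero => exact mem_pow_zero I a
  | succ m ih =>
    have haI : a ∈ I ^ m := ih (Ideal.pow_le_pow_right (Nat.le_succ m) ha)
    have hD := claimD I 𝒜 π hbij hπ e he m a haI
    have hψmem : (ψ I 𝒜 π hbij m (grMk I m a haI) : S) ∈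
        (HomogeneousIdeal.irrelevant 𝒜).toIdeal ^ (m + 1) := by
      have : (ψ I 𝒜 π hbij m (grMk I m a haI) : S) =
          dmap I 𝒜 π hbij e a - (dmap I 𝒜 π hbij e a -
            (ψ I 𝒜 π hbij m (grMk I m a haI) : S)) := by ring
      rw [this]
      exact sub_mem ha hD
    have hzero : ψ I 𝒜 π hbij m (grMk I m a haI) = 0 := by
      have hKm : (ψ I 𝒜 π hbij m (grMk I m a haI) : S) ∈ Km 𝒜 (m + 1) := by
        rw [← Km_eq_pow I 𝒜 π hbij hπ]
        exact hψmem
      have := eq_zero_of_mem_grade_of_mem_Km 𝒜 (ψ I 𝒜 π hbij m (grMk I m a haI)).2 hKm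
      exact Subtype.ext this
    have : grMk I m a haI = 0 := by
      have := congrArg (π m) hzero
      rw [π_ψ, map_zero] at this
      exact this
    rwa [grMk_eq_zero_iff] at this

lemma exists_quotEquiv (e : Fin n → 𝒜 1)
    (he : ∀ (f : MvPolynomial (Fin n) k) (hf : f ∈ I ^ 1),
      π 1 ⟨∑ j, q I 𝒜 π hbij (MvPolynomial.pderiv j f) * (e j : S),
        sum_mem_grade1 I 𝒜 π hbij e (fun j => MvPolynomial.pderiv j f)⟩ = grMk I 1 f hf)
    (m : ℕ) :
    ∃ E : (MvPolynomial (Fin n) k ⧸ I ^ m) ≃+*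
        (S ⧸ ((HomogeneousIdeal.irrelevant 𝒜).toIdeal ^ m)),
      ∀ a, E (Ideal.Quotient.mk (I ^ m) a) =
        Ideal.Quotient.mk ((HomogeneousIdeal.irrelevant 𝒜).toIdeal ^ m)
          (dmap I 𝒜 π hbij e a) := by
  classical
  set J : Ideal S := (HomogeneousIdeal.irrelevant 𝒜).toIdeal with hJ
  let φ : MvPolynomial (Fin n) k →+* S ⧸ J ^ m :=
    (Ideal.Quotient.mk (J ^ m)).comp (dmap I 𝒜 π hbij e : MvPolynomial (Fin n) k →+* S)
  have h0 : ∀ a ∈ I ^ m, φ a = 0 := fun a ha =>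
    Ideal.Quotient.eq_zero_iff_mem.mpr (d_pow_mem I 𝒜 π hbij hπ e m ha)
  let E0 : (MvPolynomial (Fin n) k ⧸ I ^ m) →+* S ⧸ J ^ m := Ideal.Quotient.lift (I ^ m) φ h0
  have hmk : ∀ a, E0 (Ideal.Quotient.mk (I ^ m) a) =
      Ideal.Quotient.mk (J ^ m) (dmap I 𝒜 π hbij e a) := fun a =>
    Ideal.Quotient.lift_mk _ _ _
  have hinj : Function.Injective E0 := by
    rw [injective_iff_map_eq_zero]
    intro x hx
    obtain ⟨a, rfl⟩ := Ideal.Quotient.mk_surjective x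
    rw [hmk] at hx
    have hd : dmap I 𝒜 π hbij e a ∈ J ^ m := Ideal.Quotient.eq_zero_iff_mem.mp hx
    exact Ideal.Quotient.eq_zero_iff_mem.mpr (injFull I 𝒜 π hbij hπ e he m a hd)
  have hsurj : Function.Surjective E0 := by
    intro y
    obtain ⟨s, rfl⟩ := Ideal.Quotient.mk_surjective y
    obtain ⟨a, ha⟩ := surjFull I 𝒜 π hbij hπ e he m s
    refine ⟨Ideal.Quotient.mk (I ^ m) a, ?_⟩
    rw [hmk]
    exact (Ideal.Quotient.mk_eq_mk_iff_sub_mem _ _).mpr (by simpa [hJ] using neg_mem ha) |>.symm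
      |>.symm
  exact ⟨RingEquiv.ofBijective E0 ⟨hinj, hsurj⟩, hmk⟩


end Main

/-- let `A = k[X₁,…,Xₙ]` and `I` an ideal with `R = A/I` smooth over `k`.
Then there is a `k`-algebra homomorphism `d : A → S(I/I²)` into the symmetric algebra of
the conormal module inducing isomorphisms `A/Iⁿ ≅ S(I/I²)/Jⁿ` for all `n ≥ 1`, where `J`
is the augmentation ideal; in particular the `I`-adic completion of `A` is isomorphic to
the `J`-adic completion of `S(I/I²)`.  (Here `S` is a model of the symmetric algebra:
a graded `A`-algebra whose `i`-th piece is identified with `I^i/I^(i+1)` by `π i`,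
compatibly with multiplication; smoothness guarantees these are isomorphisms.) -/
theorem stmt10 {k : Type*} [Field k] [IsAlgClosed k] [CharZero k] {n : ℕ}
    {S : Type*} [CommRing S]
    [Algebra (MvPolynomial (Fin n) k) S] [Algebra k S]
    [IsScalarTower k (MvPolynomial (Fin n) k) S]
    (I : Ideal (MvPolynomial (Fin n) k))
    [Algebra.Smooth k (MvPolynomial (Fin n) k ⧸ I)]
    (𝒜 : ℕ → Submodule (MvPolynomial (Fin n) k) S) [GradedAlgebra 𝒜]
    (π : ∀ i, 𝒜 i →ₗ[MvPolynomial (Fin n) k] Gr I i)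
    (hbij : ∀ i, Function.Bijective (π i))
    (hπ : ∀ (i j : ℕ) (x : 𝒜 i) (y : 𝒜 j) (f g : MvPolynomial (Fin n) k)
      (hf : f ∈ I ^ i) (hg : g ∈ I ^ j),
      π i x = grMk I i f hf → π j y = grMk I j g hg →
      π (i + j) ⟨(x : S) * (y : S), SetLike.mul_mem_graded x.2 y.2⟩ =
        grMk I (i + j) (f * g) (by rw [pow_add]; exact Ideal.mul_mem_mul hf hg)) :
    ∃ d : MvPolynomial (Fin n) k →ₐ[k] S,
      (∀ (m : ℕ) (a : MvPolynomial (Fin n) k), a ∈ I ^ m →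
        d a ∈ (HomogeneousIdeal.irrelevant 𝒜).toIdeal ^ m) ∧
      (∀ m : ℕ, 1 ≤ m →
        ∃ e : (MvPolynomial (Fin n) k ⧸ I ^ m) ≃+*
            (S ⧸ ((HomogeneousIdeal.irrelevant 𝒜).toIdeal ^ m)),
          ∀ a, e (Ideal.Quotient.mk (I ^ m) a) =
            Ideal.Quotient.mk ((HomogeneousIdeal.irrelevant 𝒜).toIdeal ^ m) (d a)) ∧
      ∃ ehat : AdicCompletion I (MvPolynomial (Fin n) k) ≃+*
          AdicCompletion (HomogeneousIdeal.irrelevant 𝒜).toIdeal S,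
        ∀ a : MvPolynomial (Fin n) k,
          ehat (algebraMap _ _ a) = algebraMap S _ (d a) := by
  obtain ⟨e, he⟩ := exists_e I 𝒜 π hbij hπ
  refine ⟨dmap I 𝒜 π hbij e, fun m a ha => d_pow_mem I 𝒜 π hbij hπ e m ha,
    fun m _ => exists_quotEquiv I 𝒜 π hbij hπ e he m, ?_⟩
  set J : Ideal S := (HomogeneousIdeal.irrelevant 𝒜).toIdeal with hJ
  have hsmA : ∀ m : ℕ, (I ^ m • ⊤ : Ideal (MvPolynomial (Fin n) k)) = I ^ m := fun m => by
    ext x; simp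
  have hsmS : ∀ m : ℕ, (J ^ m • ⊤ : Ideal S) = J ^ m := fun m => by ext x; simp
  choose E hE using fun m => exists_quotEquiv I 𝒜 π hbij hπ e he m
  let F : ∀ m : ℕ, (MvPolynomial (Fin n) k ⧸ (I ^ m • ⊤ : Ideal (MvPolynomial (Fin n) k)))
      ≃+* (S ⧸ (J ^ m • ⊤ : Ideal S)) := fun m =>
    (Ideal.quotEquivOfEq (hsmA m)).trans ((E m).trans (Ideal.quotEquivOfEq (hsmS m).symm))
  have hF : ∀ (m : ℕ) (a : MvPolynomial (Fin n) k),
      F m (Ideal.Quotient.mk _ a) = Ideal.Quotient.mk _ (dmap I 𝒜 π hbij e a) := by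
    intro m a
    simp only [F, RingEquiv.trans_apply, Ideal.quotEquivOfEq_mk, hE]
  have hcompat : ∀ {m m' : ℕ} (h : m ≤ m')
      (x : MvPolynomial (Fin n) k ⧸ (I ^ m' • ⊤ : Ideal (MvPolynomial (Fin n) k))),
      AdicCompletion.transitionMap J S h (F m' x) =
        F m (AdicCompletion.transitionMap I (MvPolynomial (Fin n) k) h x) := by
    intro m m' h x
    obtain ⟨a, rfl⟩ := Ideal.Quotient.mk_surjective x
    rw [hF, AdicCompletion.transitionMap_ideal_mk, AdicCompletion.transitionMap_ideal_mk, hF]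
  refine ⟨{
      toFun := fun x => ⟨fun m => F m (x.val m), fun {m m'} h => by
        rw [hcompat h, x.property h]⟩
      invFun := fun y => ⟨fun m => (F m).symm (y.val m), fun {m m'} h => by
        apply (F m).injective
        rw [RingEquiv.apply_symm_apply, ← hcompat h, RingEquiv.apply_symm_apply, y.property h]⟩
      left_inv := fun x => Subtype.ext (funext fun m => (F m).symm_apply_apply _)
      right_inv := fun y => Subtype.ext (funext fun m => (F m).apply_symm_apply _)
      map_mul' := fun x y => Subtype.ext (funext fun m => (F m).map_mul _ _)
      map_add' := fun x y => Subtype.ext (funext fun m => (F m).map_add _ _) }, ?_⟩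
  intro a
  apply AdicCompletion.ext
  intro m
  show F m ((algebraMap (MvPolynomial (Fin n) k)
      (AdicCompletion I (MvPolynomial (Fin n) k)) a).val m) = _
  have h1 : (algebraMap (MvPolynomial (Fin n) k)
      (AdicCompletion I (MvPolynomial (Fin n) k)) a).val m =
      Ideal.Quotient.mk (I ^ m • ⊤ : Ideal (MvPolynomial (Fin n) k)) a := rfl
  have h2 : (algebraMap S (AdicCompletion J S) (dmap I 𝒜 π hbij e a)).val m =
      Ideal.Quotient.mk (J ^ m • ⊤ : Ideal S) (dmap I 𝒜 π hbij e a) := rfl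
  rw [h1, h2, hF]
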